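/- arXiv:2505.04190 — 4 statements merged into one kernel-verified Lean document; each statement's English description precedes it below -/
import Mathlib

section
/- Let M be a linear subspace of V. Then the following are equivalent: (i) the second moment is injective on M up to sign, i.e., for all X,Y ∈ M, if X_ℓᵀX_ℓ = Y_ℓᵀY_ℓ for all ℓ = 1,…,L then X = Y or X = −Y; (ii) the second moment is bi-Lipschitz on M, i.e., there exist 0 < C₁ ≤ C₂ < ∞ with C₁·d_σ(X,Y) ≤ ‖√(XᵀX) − √(YᵀY)‖ ≤ C₂·d_σ(X,Y) for all X,Y ∈ M; (iii) for every pair of nonzero X,Y ∈ M, the tuple XᵀY = (X_1ᵀY_1,…,X_LᵀY_L) is not skew-symmetric, i.e., it is not the case that X_ℓᵀY_ℓ + Y_ℓᵀX_ℓ = 0 for all ℓ. -/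
open scoped BigOperators
open Matrix

namespace GPR

variable {L : ℕ} {N R : Fin L → ℕ}

/-- The signal space: `L`-tuples of real `N ℓ × R ℓ` matrices. -/
abbrev V (N R : Fin L → ℕ) := ∀ ℓ : Fin L, Matrix (Fin (N ℓ)) (Fin (R ℓ)) ℝ

/-- Frobenius norm of a tuple of matrices: `(Σ_ℓ Σ_{i,j} (X_ℓ)_{ij}²)^{1/2}`. -/
noncomputable def fnorm {m n : Fin L → ℕ} (X : ∀ ℓ : Fin L, Matrix (Fin (m ℓ)) (Fin (n ℓ)) ℝ) : ℝ :=
  Real.sqrt (∑ ℓ, ∑ i, ∑ j, (X ℓ i j) ^ 2)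

/-- The group `H = ∏_ℓ O(N ℓ)`, as tuples of orthogonal matrices. -/
abbrev HGroup (N : Fin L → ℕ) := ∀ ℓ : Fin L, Matrix.orthogonalGroup (Fin (N ℓ)) ℝ

/-- The action of `H` on `V`: `(Q · X)_ℓ = Q_ℓ X_ℓ`. -/
def act (Q : HGroup N) (X : V N R) : V N R :=
  fun ℓ => (Q ℓ : Matrix (Fin (N ℓ)) (Fin (N ℓ)) ℝ) * X ℓ

/-- `d_σ(X,Y) = min(‖X−Y‖, ‖X+Y‖)`. -/
noncomputable def dSigma (X Y : V N R) : ℝ := min (fnorm (X - Y)) (fnorm (X + Y))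

/-- `d_H(X,Y) = min_{Q ∈ H} ‖X − Q·Y‖`. -/
noncomputable def dH (X Y : V N R) : ℝ := ⨅ Q : HGroup N, fnorm (X - act Q Y)

/-- The positive semidefinite square root `√(XᵀX)` of the Gram matrix of a single matrix. -/
noncomputable def gramSqrt {n d : ℕ} (X : Matrix (Fin n) (Fin d) ℝ) : Matrix (Fin d) (Fin d) ℝ :=
  ((Matrix.posSemidef_conjTranspose_mul_self X).1.eigenvectorUnitary : Matrix (Fin d) (Fin d) ℝ) *
    diagonal ((√·) ∘ (Matrix.posSemidef_conjTranspose_mul_self X).1.eigenvalues) *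
    (star (Matrix.posSemidef_conjTranspose_mul_self X).1.eigenvectorUnitary : Matrix (Fin d) (Fin d) ℝ)

/-- The tuple `√(XᵀX) = (√(X₁ᵀX₁), …, √(X_LᵀX_L))`. -/
noncomputable def sqrtGram (X : V N R) : ∀ ℓ : Fin L, Matrix (Fin (R ℓ)) (Fin (R ℓ)) ℝ :=
  fun ℓ => gramSqrt (X ℓ)

/-- The second moment: tuple of Gram matrices `XᵀX = (X₁ᵀX₁, …, X_LᵀX_L)`. -/
def gram (X : V N R) : ∀ ℓ : Fin L, Matrix (Fin (R ℓ)) (Fin (R ℓ)) ℝ :=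
  fun ℓ => (X ℓ)ᵀ * X ℓ

/-- A set `S ⊆ V` is transverse to the orbits of `H` if whenever `X ∈ S` and `Q·X ∈ S`,
one has `Q·X = X` or `Q·X = −X`. -/
def Transverse (S : Set (V N R)) : Prop :=
  ∀ X ∈ S, ∀ Q : HGroup N, act Q X ∈ S → act Q X = X ∨ act Q X = -X


end GPR

namespace Matrix.PosSemidef

variable {d : Type*} [Fintype d] [DecidableEq d]

/-- The positive semidefinite square root, via the spectral decomposition. -/
noncomputable def sqrt {A : Matrix d d ℝ} (hA : A.PosSemidef) : Matrix d d ℝ :=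
  (hA.1.eigenvectorUnitary : Matrix d d ℝ) * diagonal ((√·) ∘ hA.1.eigenvalues) *
    (star hA.1.eigenvectorUnitary : Matrix d d ℝ)

open scoped MatrixOrder in
lemma sqrt_eq_cfcSqrt {A : Matrix d d ℝ} (hA : A.PosSemidef) : hA.sqrt = CFC.sqrt A := by
  rw [CFC.sqrt_eq_cfc, cfc_nnreal_eq_real _ A, hA.1.cfc_eq]
  have hmax : ∀ x, max (hA.1.eigenvalues x) 0 = hA.1.eigenvalues x :=
    fun x => max_eq_left (hA.eigenvalues_nonneg x)
  simp [IsHermitian.cfc, sqrt, Function.comp_def, hmax]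

open scoped MatrixOrder in
lemma sqrt_mul_self {A : Matrix d d ℝ} (hA : A.PosSemidef) : hA.sqrt * hA.sqrt = A := by
  rw [sqrt_eq_cfcSqrt]; exact CFC.sqrt_mul_sqrt_self A hA.nonneg

open scoped MatrixOrder in
lemma posSemidef_sqrt {A : Matrix d d ℝ} (hA : A.PosSemidef) : hA.sqrt.PosSemidef := by
  rw [sqrt_eq_cfcSqrt]; exact (CFC.sqrt_nonneg A).posSemidef

open scoped MatrixOrder in
lemma eq_sqrt_of_sq_eq {A B : Matrix d d ℝ} (hB : B.PosSemidef) (hA : A.PosSemidef)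
    (h : B ^ 2 = A) : B = hA.sqrt := by
  rw [sqrt_eq_cfcSqrt, eq_comm, CFC.sqrt_eq_iff A B hA.nonneg hB.nonneg, ← sq]; exact h

end Matrix.PosSemidef

lemma GPR.gramSqrt_eq {n d : ℕ} (X : Matrix (Fin n) (Fin d) ℝ) :
    GPR.gramSqrt X = (Matrix.posSemidef_conjTranspose_mul_self X).sqrt := rfl

namespace GPR

noncomputable section Frob

variable {m n p : Type*} [Fintype m] [Fintype n] [Fintype p]

/-- squared Frobenius norm of a single matrix -/
def frobSq (M : Matrix m n ℝ) : ℝ := ∑ i, ∑ j, (M i j)^2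

lemma frobSq_nonneg (M : Matrix m n ℝ) : 0 ≤ frobSq M :=
  Finset.sum_nonneg fun _ _ => Finset.sum_nonneg fun _ _ => sq_nonneg _

lemma frobSq_eq_zero_iff {M : Matrix m n ℝ} : frobSq M = 0 ↔ M = 0 := by
  constructor
  · intro h
    ext i j
    have h1 : ∀ i ∈ Finset.univ, (0:ℝ) ≤ ∑ j, (M i j)^2 :=
      fun _ _ => Finset.sum_nonneg fun _ _ => sq_nonneg _
    have h2 := (Finset.sum_eq_zero_iff_of_nonneg h1).mp h i (Finset.mem_univ i)
    have h3 := (Finset.sum_eq_zero_iff_of_nonneg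
      (fun j _ => sq_nonneg (M i j))).mp h2 j (Finset.mem_univ j)
    simpa using sq_eq_zero_iff.mp h3
  · rintro rfl; simp [frobSq]

lemma frobSq_transpose (M : Matrix m n ℝ) : frobSq Mᵀ = frobSq M := by
  rw [frobSq, Finset.sum_comm]; rfl

lemma frobSq_eq_trace (M : Matrix m n ℝ) : frobSq M = (Mᵀ * M).trace := by
  rw [frobSq, Finset.sum_comm, Matrix.trace]
  refine Finset.sum_congr rfl fun j _ => ?_
  simp [Matrix.mul_apply, Matrix.diag, sq]

lemma frobSq_conj [DecidableEq m] [DecidableEq n]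
    {M : Matrix m n ℝ} {P : Matrix m m ℝ} {Q : Matrix n n ℝ}
    (hP : Pᵀ * P = 1) (hQ : Q * Qᵀ = 1) : frobSq (P * M * Q) = frobSq M := by
  rw [frobSq_eq_trace, frobSq_eq_trace]
  have h1 : (P * M * Q)ᵀ * (P * M * Q) = Qᵀ * ((Mᵀ * M) * Q) := by
    simp only [Matrix.transpose_mul, Matrix.mul_assoc]
    rw [← Matrix.mul_assoc Pᵀ P, hP, Matrix.one_mul]
  rw [h1, Matrix.trace_mul_comm, Matrix.mul_assoc, hQ, Matrix.mul_one]

lemma frobSq_mul_le (A : Matrix m n ℝ) (B : Matrix n p ℝ) :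
    frobSq (A * B) ≤ frobSq A * frobSq B := by
  have h : ∀ i k, ((A * B) i k)^2 ≤ (∑ j, (A i j)^2) * (∑ j, (B j k)^2) := fun i k => by
    simpa [Matrix.mul_apply] using Finset.sum_mul_sq_le_sq_mul_sq Finset.univ (A i) (B · k)
  calc frobSq (A * B) ≤ ∑ i, ∑ k, (∑ j, (A i j)^2) * (∑ j, (B j k)^2) :=
        Finset.sum_le_sum fun i _ => Finset.sum_le_sum fun k _ => h i k
    _ = frobSq A * frobSq B := by
        rw [frobSq, frobSq, Finset.sum_mul]
        refine Finset.sum_congr rfl fun i _ => ?_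
        rw [← Finset.mul_sum]
        congr 1
        rw [Finset.sum_comm]

end Frob

section Spectral

variable {d : Type*} [Fintype d] [DecidableEq d]

lemma star_eq_transpose (M : Matrix d d ℝ) : star M = Mᵀ := by
  rw [Matrix.star_eq_conjTranspose, Matrix.conjTranspose_eq_transpose_of_trivial]

lemma frobSq_diagConj_sub {U V : Matrix d d ℝ} (hU : U ∈ Matrix.unitaryGroup d ℝ)
    (hV : V ∈ Matrix.unitaryGroup d ℝ) (f g : d → ℝ) :
    frobSq (U * diagonal f * star U - V * diagonal g * star V)
      = ∑ i, ∑ j, (f i - g j)^2 * ((star U * V) i j)^2 := by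
  have hU1 : star U * U = 1 := Matrix.mem_unitaryGroup_iff'.mp hU
  have hU2 : U * star U = 1 := Matrix.mem_unitaryGroup_iff.mp hU
  have hV1 : star V * V = 1 := Matrix.mem_unitaryGroup_iff'.mp hV
  have hV2 : V * star V = 1 := Matrix.mem_unitaryGroup_iff.mp hV
  have hconj : frobSq (star U * (U * diagonal f * star U - V * diagonal g * star V) * V)
      = frobSq (U * diagonal f * star U - V * diagonal g * star V) := by
    refine frobSq_conj ?_ ?_
    · rw [star_eq_transpose, Matrix.transpose_transpose, ← star_eq_transpose U, hU2]
    · rw [← star_eq_transpose V, hV2]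
  have hsimp : star U * (U * diagonal f * star U - V * diagonal g * star V) * V
      = diagonal f * (star U * V) - (star U * V) * diagonal g := by
    rw [Matrix.mul_sub, Matrix.sub_mul]
    congr 1
    · calc star U * (U * diagonal f * star U) * V
          = (star U * U) * diagonal f * (star U * V) := by
            simp only [Matrix.mul_assoc]
        _ = diagonal f * (star U * V) := by rw [hU1, Matrix.one_mul]
    · calc star U * (V * diagonal g * star V) * V
          = (star U * V) * (diagonal g * (star V * V)) := by
            simp only [Matrix.mul_assoc]
        _ = (star U * V) * diagonal g := by rw [hV1, Matrix.mul_one]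
  rw [← hconj, hsimp, frobSq]
  refine Finset.sum_congr rfl fun i _ => Finset.sum_congr rfl fun j _ => ?_
  rw [Matrix.sub_apply, Matrix.diagonal_mul, Matrix.mul_diagonal]
  ring

lemma abs_sub_abs_sq_le (x y : ℝ) : (|x| - |y|)^2 ≤ (x - y)^2 := by
  have h : x*y ≤ |x| * |y| := by rw [← abs_mul]; exact le_abs_self _
  nlinarith [sq_abs x, sq_abs y]

lemma spectral_abs_eq {A : Matrix d d ℝ} (hA : A.IsHermitian) (hA2 : (A * A).PosSemidef) :
    hA2.sqrt = (hA.eigenvectorUnitary : Matrix d d ℝ)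
      * diagonal (fun i => |hA.eigenvalues i|) * star (hA.eigenvectorUnitary : Matrix d d ℝ) := by
  set U := (hA.eigenvectorUnitary : Matrix d d ℝ) with hUdef
  have hU1 : star U * U = 1 := Matrix.mem_unitaryGroup_iff'.mp hA.eigenvectorUnitary.2
  symm
  refine Matrix.PosSemidef.eq_sqrt_of_sq_eq ?_ hA2 ?_
  · have := (Matrix.posSemidef_diagonal_iff.mpr
      (fun i => abs_nonneg (hA.eigenvalues i))).mul_mul_conjTranspose_same U
    rwa [← Matrix.star_eq_conjTranspose] at this
  · have hAspec : A = U * diagonal hA.eigenvalues * star U := hA.spectral_theorem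
    have hsq : ∀ f : d → ℝ, (U * diagonal f * star U) * (U * diagonal f * star U)
        = U * diagonal (f * f) * star U := by
      intro f
      calc (U * diagonal f * star U) * (U * diagonal f * star U)
          = U * (diagonal f * ((star U * U) * (diagonal f * star U))) := by
            simp only [Matrix.mul_assoc]
        _ = U * diagonal (f * f) * star U := by
            rw [hU1, Matrix.one_mul,
              ← Matrix.mul_assoc (diagonal f) (diagonal f), Matrix.diagonal_mul_diagonal,
              ← Matrix.mul_assoc]
            rfl
    rw [pow_two, hsq]
    conv_rhs => rw [hAspec]
    rw [hsq]
    have habs : (fun i => |hA.eigenvalues i|) * (fun i => |hA.eigenvalues i|)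
        = hA.eigenvalues * hA.eigenvalues := funext fun i => abs_mul_abs_self _
    rw [habs]

/-- Key matrix-analysis fact: `S ↦ √(S²)` is 1-Lipschitz in Frobenius norm on symmetric
matrices. -/
lemma frobSq_sqrtsq_sub_le {A B : Matrix d d ℝ} (hA : A.IsHermitian) (hB : B.IsHermitian)
    (hA2 : (A * A).PosSemidef) (hB2 : (B * B).PosSemidef) :
    frobSq (hA2.sqrt - hB2.sqrt) ≤ frobSq (A - B) := by
  set U := (hA.eigenvectorUnitary : Matrix d d ℝ)
  set V := (hB.eigenvectorUnitary : Matrix d d ℝ)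
  set a := hA.eigenvalues
  set b := hB.eigenvalues
  have hUu : U ∈ Matrix.unitaryGroup d ℝ := hA.eigenvectorUnitary.2
  have hVu : V ∈ Matrix.unitaryGroup d ℝ := hB.eigenvectorUnitary.2
  have h1 : frobSq (hA2.sqrt - hB2.sqrt)
      = ∑ i, ∑ j, (|a i| - |b j|)^2 * ((star U * V) i j)^2 := by
    rw [spectral_abs_eq hA hA2, spectral_abs_eq hB hB2]
    exact frobSq_diagConj_sub hUu hVu _ _
  have h2 : frobSq (A - B) = ∑ i, ∑ j, (a i - b j)^2 * ((star U * V) i j)^2 := by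
    have hAspec : A = U * diagonal a * star U := hA.spectral_theorem
    have hBspec : B = V * diagonal b * star V := hB.spectral_theorem
    conv_lhs => rw [hAspec, hBspec]
    exact frobSq_diagConj_sub hUu hVu _ _
  rw [h1, h2]
  refine Finset.sum_le_sum fun i _ => Finset.sum_le_sum fun j _ => ?_
  exact mul_le_mul_of_nonneg_right (abs_sub_abs_sq_le _ _) (sq_nonneg _)

end Spectral
section Dilation

lemma sqrt_congr {d : Type*} [Fintype d] [DecidableEq d] {A B : Matrix d d ℝ}
    (h : A = B) (hA : A.PosSemidef) (hB : B.PosSemidef) : hA.sqrt = hB.sqrt := by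
  subst h; rfl

lemma posSemidef_fromBlocks {p q : Type*} [Fintype p] [Fintype q] [DecidableEq p] [DecidableEq q]
    {P : Matrix p p ℝ} {Q : Matrix q q ℝ} (hP : P.PosSemidef) (hQ : Q.PosSemidef) :
    (Matrix.fromBlocks P 0 0 Q).PosSemidef := by
  have h := Matrix.posSemidef_conjTranspose_mul_self
    (Matrix.fromBlocks hP.sqrt 0 0 hQ.sqrt)
  have heq : (Matrix.fromBlocks hP.sqrt 0 0 hQ.sqrt)ᴴ * Matrix.fromBlocks hP.sqrt 0 0 hQ.sqrt
      = Matrix.fromBlocks P 0 0 Q := by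
    have hPt : hP.sqrtᵀ = hP.sqrt := by
      rw [← Matrix.conjTranspose_eq_transpose_of_trivial]
      exact hP.posSemidef_sqrt.isHermitian.eq
    have hQt : hQ.sqrtᵀ = hQ.sqrt := by
      rw [← Matrix.conjTranspose_eq_transpose_of_trivial]
      exact hQ.posSemidef_sqrt.isHermitian.eq
    rw [Matrix.fromBlocks_conjTranspose, Matrix.fromBlocks_multiply]
    simp [Matrix.conjTranspose_eq_transpose_of_trivial, hPt, hQt,
      hP.sqrt_mul_self, hQ.sqrt_mul_self]
  rwa [heq] at h

lemma frobSq_fromBlocks {p q r s : Type*} [Fintype p] [Fintype q] [Fintype r] [Fintype s]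
    (A : Matrix p r ℝ) (B : Matrix p s ℝ) (C : Matrix q r ℝ) (D : Matrix q s ℝ) :
    frobSq (Matrix.fromBlocks A B C D) = frobSq A + frobSq B + frobSq C + frobSq D := by
  rw [frobSq, Fintype.sum_sum_type]
  simp only [Fintype.sum_sum_type]
  rw [Finset.sum_add_distrib, Finset.sum_add_distrib]
  simp only [Matrix.fromBlocks_apply₁₁, Matrix.fromBlocks_apply₁₂, Matrix.fromBlocks_apply₂₁,
    Matrix.fromBlocks_apply₂₂]
  rw [frobSq, frobSq, frobSq, frobSq]
  ring

/-- Lipschitz bound for `X ↦ √(XᵀX)` (squared form): `‖√(XᵀX) − √(YᵀY)‖² ≤ 2‖X−Y‖²`. -/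
lemma frobSq_gramSqrt_sub_le {n r : ℕ} (X Y : Matrix (Fin n) (Fin r) ℝ) :
    frobSq (gramSqrt X - gramSqrt Y) ≤ 2 * frobSq (X - Y) := by
  classical
  -- dilation
  set SX : Matrix (Fin r ⊕ Fin n) (Fin r ⊕ Fin n) ℝ := Matrix.fromBlocks 0 Xᵀ X 0 with hSX
  set SY : Matrix (Fin r ⊕ Fin n) (Fin r ⊕ Fin n) ℝ := Matrix.fromBlocks 0 Yᵀ Y 0 with hSY
  have hHerm : ∀ Z : Matrix (Fin n) (Fin r) ℝ,
      (Matrix.fromBlocks (0 : Matrix (Fin r) (Fin r) ℝ) Zᵀ Z 0).IsHermitian := by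
    intro Z
    show _ᴴ = _
    rw [Matrix.fromBlocks_conjTranspose]
    rw [Matrix.conjTranspose_eq_transpose_of_trivial, Matrix.conjTranspose_eq_transpose_of_trivial,
      Matrix.conjTranspose_eq_transpose_of_trivial, Matrix.conjTranspose_eq_transpose_of_trivial,
      Matrix.transpose_transpose, Matrix.transpose_zero, Matrix.transpose_zero]
  have hsq : ∀ Z : Matrix (Fin n) (Fin r) ℝ,
      (Matrix.fromBlocks (0 : Matrix (Fin r) (Fin r) ℝ) Zᵀ Z 0)
        * Matrix.fromBlocks 0 Zᵀ Z 0 = Matrix.fromBlocks (Zᵀ * Z) 0 0 (Z * Zᵀ) := by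
    intro Z
    rw [Matrix.fromBlocks_multiply]
    simp
  have hPSDX : (SX * SX).PosSemidef := by
    have h := Matrix.posSemidef_conjTranspose_mul_self SX
    rwa [(hHerm X).eq] at h
  have hPSDY : (SY * SY).PosSemidef := by
    have h := Matrix.posSemidef_conjTranspose_mul_self SY
    rwa [(hHerm Y).eq] at h
  -- identify the sqrt of the dilation
  have hgram : ∀ Z : Matrix (Fin n) (Fin r) ℝ, gramSqrt Z * gramSqrt Z = Zᵀ * Z := by
    intro Z
    rw [gramSqrt_eq]
    rw [(Matrix.posSemidef_conjTranspose_mul_self Z).sqrt_mul_self,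
      Matrix.conjTranspose_eq_transpose_of_trivial]
  have hgram' : ∀ Z : Matrix (Fin n) (Fin r) ℝ,
      (Matrix.posSemidef_self_mul_conjTranspose Z).sqrt
        * (Matrix.posSemidef_self_mul_conjTranspose Z).sqrt = Z * Zᵀ := by
    intro Z
    rw [(Matrix.posSemidef_self_mul_conjTranspose Z).sqrt_mul_self,
      Matrix.conjTranspose_eq_transpose_of_trivial]
  have hblockX : hPSDX.sqrt = Matrix.fromBlocks (gramSqrt X) 0 0
      (Matrix.posSemidef_self_mul_conjTranspose X).sqrt := by
    symm
    refine Matrix.PosSemidef.eq_sqrt_of_sq_eq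
      (posSemidef_fromBlocks (Matrix.posSemidef_conjTranspose_mul_self X).posSemidef_sqrt
        (Matrix.posSemidef_self_mul_conjTranspose X).posSemidef_sqrt) hPSDX ?_
    rw [pow_two, Matrix.fromBlocks_multiply, hSX, hsq X]
    simp [gramSqrt, hgram X, hgram' X]
    exact hgram X
  have hblockY : hPSDY.sqrt = Matrix.fromBlocks (gramSqrt Y) 0 0
      (Matrix.posSemidef_self_mul_conjTranspose Y).sqrt := by
    symm
    refine Matrix.PosSemidef.eq_sqrt_of_sq_eq
      (posSemidef_fromBlocks (Matrix.posSemidef_conjTranspose_mul_self Y).posSemidef_sqrt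
        (Matrix.posSemidef_self_mul_conjTranspose Y).posSemidef_sqrt) hPSDY ?_
    rw [pow_two, Matrix.fromBlocks_multiply, hSY, hsq Y]
    simp [gramSqrt, hgram Y, hgram' Y]
    exact hgram Y
  have hmain := frobSq_sqrtsq_sub_le (hHerm X) (hHerm Y) hPSDX hPSDY
  rw [hblockX, hblockY] at hmain
  have hL : Matrix.fromBlocks (gramSqrt X) (0 : Matrix (Fin r) (Fin n) ℝ) 0
        (Matrix.posSemidef_self_mul_conjTranspose X).sqrt
      - Matrix.fromBlocks (gramSqrt Y) 0 0 (Matrix.posSemidef_self_mul_conjTranspose Y).sqrt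
      = Matrix.fromBlocks (gramSqrt X - gramSqrt Y) 0 0
        ((Matrix.posSemidef_self_mul_conjTranspose X).sqrt
          - (Matrix.posSemidef_self_mul_conjTranspose Y).sqrt) := by
    ext i j
    rcases i with i | i <;> rcases j with j | j <;>
      simp [Matrix.sub_apply]
  have hR : SX - SY = Matrix.fromBlocks 0 (Xᵀ - Yᵀ) (X - Y) 0 := by
    rw [hSX, hSY]
    ext i j
    rcases i with i | i <;> rcases j with j | j <;>
      simp [Matrix.sub_apply]
  rw [hL, hR, frobSq_fromBlocks, frobSq_fromBlocks] at hmain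
  have h2 : frobSq (Xᵀ - Yᵀ) = frobSq (X - Y) := by
    rw [← Matrix.transpose_sub, frobSq_transpose]
  have h3 := frobSq_nonneg ((Matrix.posSemidef_self_mul_conjTranspose X).sqrt
    - (Matrix.posSemidef_self_mul_conjTranspose Y).sqrt)
  simp only [frobSq_eq_zero_iff.mpr rfl] at hmain
  nlinarith [hmain, h2, h3]

end Dilation
section TupleAPI

variable {L : ℕ} {N R : Fin L → ℕ}

/-- squared Frobenius norm of a tuple -/
noncomputable def fnormSq {m n : Fin L → ℕ}
    (X : ∀ ℓ : Fin L, Matrix (Fin (m ℓ)) (Fin (n ℓ)) ℝ) : ℝ :=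
  ∑ ℓ, frobSq (X ℓ)

lemma fnorm_eq {m n : Fin L → ℕ} (X : ∀ ℓ : Fin L, Matrix (Fin (m ℓ)) (Fin (n ℓ)) ℝ) :
    fnorm X = Real.sqrt (fnormSq X) := rfl

lemma fnormSq_nonneg {m n : Fin L → ℕ} (X : ∀ ℓ : Fin L, Matrix (Fin (m ℓ)) (Fin (n ℓ)) ℝ) :
    0 ≤ fnormSq X :=
  Finset.sum_nonneg fun _ _ => frobSq_nonneg _

lemma fnorm_nonneg {m n : Fin L → ℕ} (X : ∀ ℓ : Fin L, Matrix (Fin (m ℓ)) (Fin (n ℓ)) ℝ) :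
    0 ≤ fnorm X := Real.sqrt_nonneg _

lemma fnormSq_eq_zero_iff {m n : Fin L → ℕ} {X : ∀ ℓ : Fin L, Matrix (Fin (m ℓ)) (Fin (n ℓ)) ℝ} :
    fnormSq X = 0 ↔ X = 0 := by
  constructor
  · intro h
    funext ℓ
    have := (Finset.sum_eq_zero_iff_of_nonneg (fun ℓ _ => frobSq_nonneg (X ℓ))).mp h ℓ
      (Finset.mem_univ ℓ)
    exact frobSq_eq_zero_iff.mp this
  · rintro rfl; simp [fnormSq, frobSq]

lemma fnorm_eq_zero_iff {m n : Fin L → ℕ} {X : ∀ ℓ : Fin L, Matrix (Fin (m ℓ)) (Fin (n ℓ)) ℝ} :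
    fnorm X = 0 ↔ X = 0 := by
  rw [fnorm_eq, Real.sqrt_eq_zero']
  constructor
  · intro h
    exact fnormSq_eq_zero_iff.mp (le_antisymm h (fnormSq_nonneg X))
  · rintro rfl
    exact le_of_eq (fnormSq_eq_zero_iff.mpr rfl)

lemma fnormSq_smul {m n : Fin L → ℕ} (c : ℝ) (X : ∀ ℓ : Fin L, Matrix (Fin (m ℓ)) (Fin (n ℓ)) ℝ) :
    fnormSq (c • X) = c^2 * fnormSq X := by
  simp only [fnormSq, frobSq, Pi.smul_apply, Matrix.smul_apply, smul_eq_mul, mul_pow,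
    Finset.mul_sum]

lemma fnormSq_parallelogram {m n : Fin L → ℕ}
    (X Y : ∀ ℓ : Fin L, Matrix (Fin (m ℓ)) (Fin (n ℓ)) ℝ) :
    fnormSq (X - Y) + fnormSq (X + Y) = 2 * (fnormSq X + fnormSq Y) := by
  simp only [fnormSq, frobSq, Pi.sub_apply, Pi.add_apply, Matrix.sub_apply, Matrix.add_apply,
    ← Finset.sum_add_distrib, Finset.mul_sum]
  refine Finset.sum_congr rfl fun ℓ _ => ?_
  refine Finset.sum_congr rfl fun i _ => ?_
  refine Finset.sum_congr rfl fun j _ => ?_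
  ring

end TupleAPI
section Bounds

lemma frobSq_add_le {m n : Type*} [Fintype m] [Fintype n] (A B : Matrix m n ℝ) :
    frobSq (A + B) ≤ 2 * frobSq A + 2 * frobSq B := by
  have h : ∀ i j, ((A + B) i j)^2 ≤ 2*(A i j)^2 + 2*(B i j)^2 := fun i j => by
    rw [Matrix.add_apply]; nlinarith [sq_nonneg (A i j - B i j)]
  calc frobSq (A + B) ≤ ∑ i, ∑ j, (2*(A i j)^2 + 2*(B i j)^2) :=
        Finset.sum_le_sum fun i _ => Finset.sum_le_sum fun j _ => h i j
    _ = 2 * frobSq A + 2 * frobSq B := by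
        simp only [Finset.sum_add_distrib, ← Finset.mul_sum, frobSq]

lemma gramSqrt_mul_self {n d : ℕ} (Z : Matrix (Fin n) (Fin d) ℝ) :
    gramSqrt Z * gramSqrt Z = Zᵀ * Z := by
  rw [gramSqrt_eq]
  rw [(Matrix.posSemidef_conjTranspose_mul_self Z).sqrt_mul_self,
    Matrix.conjTranspose_eq_transpose_of_trivial]

lemma gramSqrt_transpose {n d : ℕ} (Z : Matrix (Fin n) (Fin d) ℝ) :
    (gramSqrt Z)ᵀ = gramSqrt Z := by
  rw [← Matrix.conjTranspose_eq_transpose_of_trivial]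
  exact (Matrix.posSemidef_conjTranspose_mul_self Z).posSemidef_sqrt.isHermitian.eq

lemma frobSq_gramSqrt {n d : ℕ} (Z : Matrix (Fin n) (Fin d) ℝ) :
    frobSq (gramSqrt Z) = frobSq Z := by
  rw [frobSq_eq_trace, frobSq_eq_trace, gramSqrt_transpose, gramSqrt_mul_self]

variable {L : ℕ} {N R : Fin L → ℕ}

lemma sqrtGram_neg (Y : V N R) : sqrtGram (-Y) = sqrtGram Y := by
  funext ℓ
  show gramSqrt ((-Y) ℓ) = gramSqrt (Y ℓ)
  have h : ((-Y) ℓ)ᴴ * ((-Y) ℓ) = (Y ℓ)ᴴ * (Y ℓ) := by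
    simp
  exact sqrt_congr h (Matrix.posSemidef_conjTranspose_mul_self _)
    (Matrix.posSemidef_conjTranspose_mul_self _)

lemma fnormSq_sqrtGram_sub_le (X Y : V N R) :
    fnormSq (sqrtGram X - sqrtGram Y) ≤ 2 * fnormSq (X - Y) := by
  simp only [fnormSq, Finset.mul_sum]
  refine Finset.sum_le_sum fun ℓ _ => ?_
  have h := frobSq_gramSqrt_sub_le (X ℓ) (Y ℓ)
  have h1 : (sqrtGram X - sqrtGram Y) ℓ = gramSqrt (X ℓ) - gramSqrt (Y ℓ) := rfl
  have h2 : (X - Y) ℓ = X ℓ - Y ℓ := rfl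
  rw [h1, h2]
  exact h

/-- the upper Lipschitz bound, valid on all of `V`. -/
lemma fnorm_sqrtGram_sub_le (X Y : V N R) :
    fnorm (sqrtGram X - sqrtGram Y) ≤ Real.sqrt 2 * dSigma X Y := by
  have key : ∀ Z : V N R, fnorm (sqrtGram X - sqrtGram Z) ≤ Real.sqrt 2 * fnorm (X - Z) := by
    intro Z
    rw [fnorm_eq, fnorm_eq, ← Real.sqrt_mul (by norm_num : (0:ℝ) ≤ 2)]
    exact Real.sqrt_le_sqrt (fnormSq_sqrtGram_sub_le X Z)
  have h1 : fnorm (sqrtGram X - sqrtGram Y) ≤ Real.sqrt 2 * fnorm (X - Y) := key Y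
  have h2 : fnorm (sqrtGram X - sqrtGram Y) ≤ Real.sqrt 2 * fnorm (X + Y) := by
    have := key (-Y)
    rwa [sqrtGram_neg, sub_neg_eq_add] at this
  rw [dSigma]
  rcases le_total (fnorm (X - Y)) (fnorm (X + Y)) with h | h
  · rwa [min_eq_left h]
  · rwa [min_eq_right h]

lemma sum_mul_le_sum_mul_sum {s : Finset (Fin L)} (a c : Fin L → ℝ)
    (ha : ∀ ℓ, 0 ≤ a ℓ) (hc : ∀ ℓ, 0 ≤ c ℓ) :
    ∑ ℓ ∈ s, a ℓ * c ℓ ≤ (∑ ℓ ∈ s, a ℓ) * (∑ ℓ ∈ s, c ℓ) := by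
  refine le_trans (Finset.sum_le_sum fun ℓ hℓ =>
    mul_le_mul_of_nonneg_left (Finset.single_le_sum (fun i _ => hc i) hℓ) (ha ℓ)) ?_
  rw [← Finset.sum_mul]

lemma fnormSq_gramDiff_le (X Y : V N R) :
    fnormSq (fun ℓ => (X ℓ)ᵀ * X ℓ - (Y ℓ)ᵀ * Y ℓ) ≤
      2 * (fnormSq X + fnormSq Y) * fnormSq (sqrtGram X - sqrtGram Y) := by
  have hper : ∀ ℓ, frobSq ((X ℓ)ᵀ * X ℓ - (Y ℓ)ᵀ * Y ℓ) ≤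
      2 * (frobSq (X ℓ) * frobSq ((sqrtGram X - sqrtGram Y) ℓ))
      + 2 * (frobSq (Y ℓ) * frobSq ((sqrtGram X - sqrtGram Y) ℓ)) := by
    intro ℓ
    have hC : (sqrtGram X - sqrtGram Y) ℓ = gramSqrt (X ℓ) - gramSqrt (Y ℓ) := rfl
    set P := gramSqrt (X ℓ) with hP
    set Q := gramSqrt (Y ℓ) with hQ
    have hid : (X ℓ)ᵀ * X ℓ - (Y ℓ)ᵀ * Y ℓ = P * (P - Q) + (P - Q) * Q := by
      have h1 : P * (P - Q) + (P - Q) * Q = P * P - Q * Q := by noncomm_ring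
      rw [h1, hP, hQ, gramSqrt_mul_self, gramSqrt_mul_self]
    rw [hid, hC]
    have e1 := frobSq_mul_le P (P - Q)
    have e2 := frobSq_mul_le (P - Q) Q
    have e3 := frobSq_add_le (P * (P - Q)) ((P - Q) * Q)
    have e4 : frobSq P = frobSq (X ℓ) := by rw [hP, frobSq_gramSqrt]
    have e5 : frobSq Q = frobSq (Y ℓ) := by rw [hQ, frobSq_gramSqrt]
    nlinarith [frobSq_nonneg (P - Q), frobSq_nonneg P, frobSq_nonneg Q]
  calc fnormSq (fun ℓ => (X ℓ)ᵀ * X ℓ - (Y ℓ)ᵀ * Y ℓ)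
      ≤ ∑ ℓ, (2 * (frobSq (X ℓ) * frobSq ((sqrtGram X - sqrtGram Y) ℓ))
        + 2 * (frobSq (Y ℓ) * frobSq ((sqrtGram X - sqrtGram Y) ℓ))) :=
        Finset.sum_le_sum fun ℓ _ => hper ℓ
    _ ≤ 2 * (fnormSq X + fnormSq Y) * fnormSq (sqrtGram X - sqrtGram Y) := by
        rw [Finset.sum_add_distrib, ← Finset.mul_sum, ← Finset.mul_sum]
        have hx := sum_mul_le_sum_mul_sum (s := Finset.univ) (fun ℓ => frobSq (X ℓ))
          (fun ℓ => frobSq ((sqrtGram X - sqrtGram Y) ℓ))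
          (fun ℓ => frobSq_nonneg _) (fun ℓ => frobSq_nonneg _)
        have hy := sum_mul_le_sum_mul_sum (s := Finset.univ) (fun ℓ => frobSq (Y ℓ))
          (fun ℓ => frobSq ((sqrtGram X - sqrtGram Y) ℓ))
          (fun ℓ => frobSq_nonneg _) (fun ℓ => frobSq_nonneg _)
        simp only [fnormSq]
        nlinarith [hx, hy]

end Bounds
section Compact

variable {L : ℕ} {N R : Fin L → ℕ}

/-- The symmetrized bilinear form `B(U,W)_ℓ = U_ℓᵀ W_ℓ + W_ℓᵀ U_ℓ`. -/
def Bmap (U W : V N R) : ∀ ℓ : Fin L, Matrix (Fin (R ℓ)) (Fin (R ℓ)) ℝ :=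
  fun ℓ => (U ℓ)ᵀ * W ℓ + (W ℓ)ᵀ * U ℓ

lemma Bmap_smul_left (c : ℝ) (U W : V N R) : Bmap (c • U) W = c • Bmap U W := by
  funext ℓ
  show ((c • U) ℓ)ᵀ * W ℓ + (W ℓ)ᵀ * (c • U) ℓ = c • ((U ℓ)ᵀ * W ℓ + (W ℓ)ᵀ * U ℓ)
  have h : (c • U) ℓ = c • (U ℓ) := rfl
  rw [h, Matrix.transpose_smul, Matrix.smul_mul, Matrix.mul_smul, smul_add]

lemma Bmap_comm (U W : V N R) : Bmap U W = Bmap W U := by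
  funext ℓ
  show (U ℓ)ᵀ * W ℓ + (W ℓ)ᵀ * U ℓ = (W ℓ)ᵀ * U ℓ + (U ℓ)ᵀ * W ℓ
  rw [add_comm]

lemma Bmap_smul_right (c : ℝ) (U W : V N R) : Bmap U (c • W) = c • Bmap U W := by
  rw [Bmap_comm, Bmap_smul_left, Bmap_comm]

attribute [local instance] Matrix.normedAddCommGroup Matrix.normedSpace

lemma fnormSq_continuous : Continuous fun X : V N R => fnormSq X := by
  have h : (fun X : V N R => fnormSq X) = fun X => ∑ ℓ, ∑ i, ∑ j, (X ℓ i j)^2 := by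
    funext X; simp only [fnormSq, frobSq]
  rw [h]
  refine continuous_finset_sum _ fun ℓ _ => continuous_finset_sum _ fun i _ =>
    continuous_finset_sum _ fun j _ => ?_
  exact ((continuous_apply j).comp ((continuous_apply i).comp (continuous_apply ℓ))).pow 2

lemma phi_continuous : Continuous fun p : V N R × V N R => fnormSq (Bmap p.1 p.2) := by
  have h : (fun p : V N R × V N R => fnormSq (Bmap p.1 p.2))
      = fun p => ∑ ℓ, ∑ i, ∑ j,
        ((∑ k, p.1 ℓ k i * p.2 ℓ k j) + (∑ k, p.2 ℓ k i * p.1 ℓ k j))^2 := by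
    funext p
    simp only [fnormSq, frobSq, Bmap, Matrix.add_apply, Matrix.mul_apply, Matrix.transpose_apply]
  rw [h]
  have c1 : ∀ (ℓ : Fin L) (k : Fin (N ℓ)) (i : Fin (R ℓ)),
      Continuous fun p : V N R × V N R => p.1 ℓ k i := fun ℓ k i =>
    (continuous_apply i).comp ((continuous_apply k).comp ((continuous_apply ℓ).comp
      continuous_fst))
  have c2 : ∀ (ℓ : Fin L) (k : Fin (N ℓ)) (i : Fin (R ℓ)),
      Continuous fun p : V N R × V N R => p.2 ℓ k i := fun ℓ k i =>
    (continuous_apply i).comp ((continuous_apply k).comp ((continuous_apply ℓ).comp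
      continuous_snd))
  refine continuous_finset_sum _ fun ℓ _ => continuous_finset_sum _ fun i _ =>
    continuous_finset_sum _ fun j _ => ?_
  exact ((continuous_finset_sum _ fun k _ => (c1 ℓ k i).mul (c2 ℓ k j)).add
    (continuous_finset_sum _ fun k _ => (c2 ℓ k i).mul (c1 ℓ k j))).pow 2

lemma entry_sq_le_fnormSq (X : V N R) (ℓ : Fin L) (i : Fin (N ℓ)) (j : Fin (R ℓ)) :
    (X ℓ i j)^2 ≤ fnormSq X := by
  have h0 : (X ℓ i j)^2 ≤ ∑ j', (X ℓ i j')^2 :=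
    Finset.single_le_sum (f := fun j' => (X ℓ i j')^2) (fun _ _ => sq_nonneg _)
      (Finset.mem_univ j)
  have h1 : (X ℓ i j)^2 ≤ frobSq (X ℓ) :=
    le_trans h0 (Finset.single_le_sum (f := fun i' => ∑ j', (X ℓ i' j')^2)
      (fun _ _ => Finset.sum_nonneg fun _ _ => sq_nonneg _) (Finset.mem_univ i))
  exact le_trans h1 (Finset.single_le_sum (f := fun ℓ' => frobSq (X ℓ'))
    (fun _ _ => frobSq_nonneg _) (Finset.mem_univ ℓ))

lemma norm_le_one_of_fnormSq_eq_one {X : V N R} (h : fnormSq X = 1) : ‖X‖ ≤ 1 := by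
  refine (pi_norm_le_iff_of_nonneg zero_le_one).mpr fun ℓ => ?_
  refine (Matrix.norm_le_iff zero_le_one).mpr fun i j => ?_
  rw [Real.norm_eq_abs, ← Real.sqrt_one, ← Real.sqrt_sq_eq_abs]
  refine Real.sqrt_le_sqrt ?_
  rw [← h]
  exact entry_sq_le_fnormSq X ℓ i j

lemma fnormSq_normalize {X : V N R} (hX : X ≠ 0) :
    0 < fnormSq X ∧ fnormSq ((Real.sqrt (fnormSq X))⁻¹ • X) = 1 := by
  have hs : fnormSq X ≠ 0 := fun h => hX (fnormSq_eq_zero_iff.mp h)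
  have hpos : 0 < fnormSq X := lt_of_le_of_ne (fnormSq_nonneg X) (Ne.symm hs)
  refine ⟨hpos, ?_⟩
  rw [fnormSq_smul]
  rw [← Real.sqrt_inv, Real.sq_sqrt (by positivity)]
  field_simp

lemma exists_c0 (M : Submodule ℝ (V N R))
    (hiii : ∀ X ∈ M, X ≠ 0 → ∀ Y ∈ M, Y ≠ 0 →
      ¬ (∀ ℓ, (X ℓ)ᵀ * Y ℓ + (Y ℓ)ᵀ * X ℓ = 0)) :
    ∃ c₀ : ℝ, 0 < c₀ ∧ ∀ U ∈ M, ∀ W ∈ M,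
      c₀ * (fnormSq U * fnormSq W) ≤ fnormSq (Bmap U W) := by
  by_cases hM : ∀ X ∈ M, X = (0 : V N R)
  · refine ⟨1, one_pos, fun U hU W hW => ?_⟩
    have hz : fnormSq U = 0 := by rw [hM U hU]; exact fnormSq_eq_zero_iff.mpr rfl
    rw [hz]
    simpa using fnormSq_nonneg (Bmap U W)
  · push_neg at hM
    obtain ⟨X₀, hX₀M, hX₀⟩ := hM
    set K : Set (V N R × V N R) :=
      {p | p.1 ∈ M ∧ p.2 ∈ M ∧ fnormSq p.1 = 1 ∧ fnormSq p.2 = 1} with hK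
    have hMc : IsClosed (M : Set (V N R)) := Submodule.closed_of_finiteDimensional M
    have hclosed : IsClosed K := by
      have h1 : IsClosed {p : V N R × V N R | p.1 ∈ M} := hMc.preimage continuous_fst
      have h2 : IsClosed {p : V N R × V N R | p.2 ∈ M} := hMc.preimage continuous_snd
      have h3 : IsClosed {p : V N R × V N R | fnormSq p.1 = 1} :=
        isClosed_eq (fnormSq_continuous.comp continuous_fst) continuous_const
      have h4 : IsClosed {p : V N R × V N R | fnormSq p.2 = 1} :=
        isClosed_eq (fnormSq_continuous.comp continuous_snd) continuous_const
      exact h1.inter (h2.inter (h3.inter h4))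
    have hcompact : IsCompact K := by
      refine Metric.isCompact_of_isClosed_isBounded hclosed ?_
      refine (isBounded_iff_forall_norm_le).mpr ⟨1, fun p hp => ?_⟩
      obtain ⟨_, _, hn1, hn2⟩ := hp
      rw [Prod.norm_def]
      exact max_le (norm_le_one_of_fnormSq_eq_one hn1) (norm_le_one_of_fnormSq_eq_one hn2)
    have hne : K.Nonempty := by
      obtain ⟨hpos, hone⟩ := fnormSq_normalize hX₀
      refine ⟨((Real.sqrt (fnormSq X₀))⁻¹ • X₀, (Real.sqrt (fnormSq X₀))⁻¹ • X₀),
        M.smul_mem _ hX₀M, M.smul_mem _ hX₀M, hone, hone⟩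
    obtain ⟨p₀, hp₀K, hmin⟩ := hcompact.exists_isMinOn hne phi_continuous.continuousOn
    obtain ⟨hp₁M, hp₂M, hp₁n, hp₂n⟩ := hp₀K
    set c₀ := fnormSq (Bmap p₀.1 p₀.2) with hc₀
    have hp₁0 : p₀.1 ≠ 0 := by
      intro h
      rw [h, fnormSq_eq_zero_iff.mpr rfl] at hp₁n
      norm_num at hp₁n
    have hp₂0 : p₀.2 ≠ 0 := by
      intro h
      rw [h, fnormSq_eq_zero_iff.mpr rfl] at hp₂n
      norm_num at hp₂n
    have hc₀pos : 0 < c₀ := by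
      have hBne : Bmap p₀.1 p₀.2 ≠ 0 := by
        intro h0
        exact hiii p₀.1 hp₁M hp₁0 p₀.2 hp₂M hp₂0 fun ℓ => congrFun h0 ℓ
      have : fnormSq (Bmap p₀.1 p₀.2) ≠ 0 := fun h => hBne (fnormSq_eq_zero_iff.mp h)
      exact lt_of_le_of_ne (fnormSq_nonneg _) (Ne.symm this)
    refine ⟨c₀, hc₀pos, fun U hU W hW => ?_⟩
    by_cases hU0 : U = 0
    · have hz : fnormSq U = 0 := by rw [hU0]; exact fnormSq_eq_zero_iff.mpr rfl
      rw [hz]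
      simpa using fnormSq_nonneg (Bmap U W)
    by_cases hW0 : W = 0
    · have hz : fnormSq W = 0 := by rw [hW0]; exact fnormSq_eq_zero_iff.mpr rfl
      rw [hz]
      simpa using fnormSq_nonneg (Bmap U W)
    obtain ⟨hUpos, hUone⟩ := fnormSq_normalize hU0
    obtain ⟨hWpos, hWone⟩ := fnormSq_normalize hW0
    set a := (Real.sqrt (fnormSq U))⁻¹ with ha
    set b := (Real.sqrt (fnormSq W))⁻¹ with hb
    have hpair : (a • U, b • W) ∈ K := ⟨M.smul_mem _ hU, M.smul_mem _ hW, hUone, hWone⟩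
    have hmin' := isMinOn_iff.mp hmin (a • U, b • W) hpair
    have hcomp : fnormSq (Bmap (a • U) (b • W)) = (a*b)^2 * fnormSq (Bmap U W) := by
      rw [Bmap_smul_left, Bmap_smul_right, smul_smul, fnormSq_smul]
    rw [hcomp] at hmin'
    have hab : (a*b)^2 = (fnormSq U * fnormSq W)⁻¹ := by
      rw [mul_pow, ha, hb, inv_pow, inv_pow, Real.sq_sqrt (le_of_lt hUpos),
        Real.sq_sqrt (le_of_lt hWpos), mul_inv]
    rw [hab] at hmin'
    have hprodpos : 0 < fnormSq U * fnormSq W := mul_pos hUpos hWpos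
    calc c₀ * (fnormSq U * fnormSq W)
        ≤ ((fnormSq U * fnormSq W)⁻¹ * fnormSq (Bmap U W)) * (fnormSq U * fnormSq W) := by
          exact mul_le_mul_of_nonneg_right hmin' (le_of_lt hprodpos)
      _ = fnormSq (Bmap U W) := by field_simp
end Compact
section Lower

variable {L : ℕ} {N R : Fin L → ℕ}

lemma dSigma_nonneg (X Y : V N R) : 0 ≤ dSigma X Y :=
  le_min (fnorm_nonneg _) (fnorm_nonneg _)

lemma lower_bound (M : Submodule ℝ (V N R))
    (hiii : ∀ X ∈ M, X ≠ 0 → ∀ Y ∈ M, Y ≠ 0 →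
      ¬ (∀ ℓ, (X ℓ)ᵀ * Y ℓ + (Y ℓ)ᵀ * X ℓ = 0)) :
    ∃ c : ℝ, 0 < c ∧ ∀ X ∈ M, ∀ Y ∈ M,
      c * dSigma X Y ≤ fnorm (sqrtGram X - sqrtGram Y) := by
  obtain ⟨c₀, hc₀, hkey⟩ := exists_c0 M hiii
  have hc8 : 0 < c₀ / 8 := div_pos hc₀ (by norm_num)
  refine ⟨Real.sqrt (c₀/8), Real.sqrt_pos.mpr hc8, fun X hX Y hY => ?_⟩
  set m₁ := fnormSq (X - Y) with hm₁
  set m₂ := fnormSq (X + Y) with hm₂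
  set s := fnormSq X + fnormSq Y with hs
  set F := fnormSq (sqrtGram X - sqrtGram Y) with hF
  set G := fnormSq (fun ℓ => (X ℓ)ᵀ * X ℓ - (Y ℓ)ᵀ * Y ℓ) with hG
  have hBgram : Bmap (X - Y) (X + Y)
      = (2:ℝ) • (fun ℓ => (X ℓ)ᵀ * X ℓ - (Y ℓ)ᵀ * Y ℓ) := by
    funext ℓ
    show ((X - Y) ℓ)ᵀ * (X + Y) ℓ + ((X + Y) ℓ)ᵀ * (X - Y) ℓ
      = (2:ℝ) • ((X ℓ)ᵀ * X ℓ - (Y ℓ)ᵀ * Y ℓ)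
    have h1 : (X - Y) ℓ = X ℓ - Y ℓ := rfl
    have h2 : (X + Y) ℓ = X ℓ + Y ℓ := rfl
    rw [h1, h2, two_smul, Matrix.transpose_sub, Matrix.transpose_add]
    simp only [Matrix.add_mul, Matrix.sub_mul, Matrix.mul_add, Matrix.mul_sub]
    abel
  have hG4 : fnormSq (Bmap (X - Y) (X + Y)) = 4 * G := by
    rw [hBgram, fnormSq_smul]
    norm_num
    exact hG.symm
  have hkey' : c₀ * (m₁ * m₂) ≤ 4 * G := by
    rw [← hG4]
    exact hkey _ (M.sub_mem hX hY) _ (M.add_mem hX hY)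
  have hGle : G ≤ 2 * s * F := fnormSq_gramDiff_le X Y
  have hpar : m₁ + m₂ = 2 * s := fnormSq_parallelogram X Y
  by_cases hs0 : s = 0
  · have hX0 : fnormSq X = 0 :=
      le_antisymm (by rw [hs] at hs0; nlinarith [fnormSq_nonneg X, fnormSq_nonneg Y])
        (fnormSq_nonneg X)
    have hY0 : fnormSq Y = 0 :=
      le_antisymm (by rw [hs] at hs0; nlinarith [fnormSq_nonneg X, fnormSq_nonneg Y])
        (fnormSq_nonneg Y)
    have hXz : X = 0 := fnormSq_eq_zero_iff.mp hX0
    have hYz : Y = 0 := fnormSq_eq_zero_iff.mp hY0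
    have hd0 : dSigma X Y = 0 := by
      rw [dSigma, hXz, hYz]
      simp [fnorm_eq_zero_iff.mpr rfl]
    rw [hd0, mul_zero]
    exact fnorm_nonneg _
  · have hspos : 0 < s :=
      lt_of_le_of_ne (add_nonneg (fnormSq_nonneg X) (fnormSq_nonneg Y)) (Ne.symm hs0)
    set μ := min m₁ m₂ with hμ
    have hμ1 : μ ≤ m₁ := min_le_left _ _
    have hμ2 : μ ≤ m₂ := min_le_right _ _
    have hμ0 : 0 ≤ μ := le_min (fnormSq_nonneg _) (fnormSq_nonneg _)
    have hm₁0 : 0 ≤ m₁ := fnormSq_nonneg _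
    have hm₂0 : 0 ≤ m₂ := fnormSq_nonneg _
    have hF0 : 0 ≤ F := fnormSq_nonneg _
    have h3 : μ * (2 * s) ≤ 2 * (m₁ * m₂) := by
      have e1 : μ * m₁ ≤ m₂ * m₁ := mul_le_mul_of_nonneg_right hμ2 hm₁0
      have e2 : μ * m₂ ≤ m₁ * m₂ := mul_le_mul_of_nonneg_right hμ1 hm₂0
      calc μ * (2 * s) = μ * m₁ + μ * m₂ := by rw [← hpar]; ring
        _ ≤ m₂ * m₁ + m₁ * m₂ := add_le_add e1 e2
        _ = 2 * (m₁ * m₂) := by ring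
    have h6 : (2 * s) * (c₀ * μ) ≤ (2 * s) * (8 * F) := by
      have h4 : c₀ * (μ * (2 * s)) ≤ c₀ * (2 * (m₁ * m₂)) :=
        mul_le_mul_of_nonneg_left h3 (le_of_lt hc₀)
      nlinarith [hkey', hGle]
    have h7 : c₀ * μ ≤ 8 * F :=
      le_of_mul_le_mul_left h6 (by linarith)
    have hFge : c₀ / 8 * μ ≤ F := by linarith
    have hd : dSigma X Y = Real.sqrt μ := by
      rw [dSigma, fnorm_eq, fnorm_eq, ← hm₁, ← hm₂, hμ]
      rcases le_total m₁ m₂ with h | h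
      · rw [min_eq_left (Real.sqrt_le_sqrt h), min_eq_left h]
      · rw [min_eq_right (Real.sqrt_le_sqrt h), min_eq_right h]
    rw [hd, fnorm_eq, ← hF]
    calc Real.sqrt (c₀/8) * Real.sqrt μ = Real.sqrt (c₀/8 * μ) :=
        (Real.sqrt_mul (le_of_lt hc8) _).symm
      _ ≤ Real.sqrt F := Real.sqrt_le_sqrt hFge

end Lower

section Algebra

variable {L : ℕ} {N R : Fin L → ℕ}

lemma expand1 {n d : ℕ} (A B : Matrix (Fin n) (Fin d) ℝ) :
    (A + B)ᵀ * (A - B) + (A - B)ᵀ * (A + B)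
      = (Aᵀ * A - Bᵀ * B) + (Aᵀ * A - Bᵀ * B) := by
  rw [Matrix.transpose_add, Matrix.transpose_sub]
  simp only [Matrix.add_mul, Matrix.sub_mul, Matrix.mul_add, Matrix.mul_sub]
  abel

lemma expand2 {n d : ℕ} (A B : Matrix (Fin n) (Fin d) ℝ) :
    (A + B)ᵀ * (A + B) - (A - B)ᵀ * (A - B)
      = (Aᵀ * B + Bᵀ * A) + (Aᵀ * B + Bᵀ * A) := by
  rw [Matrix.transpose_add, Matrix.transpose_sub]
  simp only [Matrix.add_mul, Matrix.sub_mul, Matrix.mul_add, Matrix.mul_sub]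
  abel

lemma inj_iff_noskew (M : Submodule ℝ (V N R)) :
    (∀ X ∈ M, ∀ Y ∈ M, (∀ ℓ, (X ℓ)ᵀ * X ℓ = (Y ℓ)ᵀ * Y ℓ) → X = Y ∨ X = -Y) ↔
    (∀ X ∈ M, X ≠ 0 → ∀ Y ∈ M, Y ≠ 0 →
      ¬ (∀ ℓ, (X ℓ)ᵀ * Y ℓ + (Y ℓ)ᵀ * X ℓ = 0)) := by
  constructor
  · intro hi X hX hX0 Y hY hY0 hskew
    have heq : ∀ ℓ, ((X + Y) ℓ)ᵀ * (X + Y) ℓ = ((X - Y) ℓ)ᵀ * (X - Y) ℓ := by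
      intro ℓ
      have h1 : (X + Y) ℓ = X ℓ + Y ℓ := rfl
      have h2 : (X - Y) ℓ = X ℓ - Y ℓ := rfl
      rw [h1, h2]
      have h3 := expand2 (X ℓ) (Y ℓ)
      rw [hskew ℓ] at h3
      have h4 : (X ℓ + Y ℓ)ᵀ * (X ℓ + Y ℓ) - (X ℓ - Y ℓ)ᵀ * (X ℓ - Y ℓ) = 0 := by
        simpa using h3
      exact sub_eq_zero.mp h4
    rcases hi (X + Y) (M.add_mem hX hY) (X - Y) (M.sub_mem hX hY) heq with h | h
    · apply hY0
      have h5 : Y + Y = 0 := by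
        have h6 : (X + Y) - (X - Y) = 0 := by rw [h]; abel
        calc Y + Y = (X + Y) - (X - Y) := by abel
          _ = 0 := h6
      have h7 : (2:ℝ) • Y = 0 := by rw [two_smul]; exact h5
      simpa using (smul_eq_zero.mp h7).resolve_left (by norm_num)
    · apply hX0
      have h5 : X + X = 0 := by
        have h6 : (X + Y) + (X - Y) = 0 := by rw [h]; abel
        calc X + X = (X + Y) + (X - Y) := by abel
          _ = 0 := h6
      have h7 : (2:ℝ) • X = 0 := by rw [two_smul]; exact h5
      simpa using (smul_eq_zero.mp h7).resolve_left (by norm_num)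
  · intro hiii X hX Y hY heq
    by_contra hcon
    push_neg at hcon
    obtain ⟨h1, h2⟩ := hcon
    have hU0 : X + Y ≠ 0 := fun h => h2 (eq_neg_of_add_eq_zero_left h)
    have hW0 : X - Y ≠ 0 := fun h => h1 (sub_eq_zero.mp h)
    refine hiii (X + Y) (M.add_mem hX hY) hU0 (X - Y) (M.sub_mem hX hY) hW0 fun ℓ => ?_
    have h1' : (X + Y) ℓ = X ℓ + Y ℓ := rfl
    have h2' : (X - Y) ℓ = X ℓ - Y ℓ := rfl
    rw [h1', h2', expand1, heq ℓ]
    simp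

end Algebra

/-- For a linear subspace `M ⊆ V`, the following are equivalent:
(i) the second moment is injective on `M` up to sign;
(ii) the second moment is bi-Lipschitz on `M`;
(iii) for all nonzero `X, Y ∈ M`, the tuple `XᵀY` is not skew-symmetric. -/
theorem linear_injective_iff_biLipschitz_iff_no_skew
    (L : ℕ) (hL : 0 < L) (N R : Fin L → ℕ) (hN : ∀ ℓ, 0 < N ℓ) (hR : ∀ ℓ, 0 < R ℓ)
    (M : Submodule ℝ (V N R)) :
    ((∀ X ∈ M, ∀ Y ∈ M, (∀ ℓ, (X ℓ)ᵀ * X ℓ = (Y ℓ)ᵀ * Y ℓ) → X = Y ∨ X = -Y) ↔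
      (∃ C₁ C₂ : ℝ, 0 < C₁ ∧ C₁ ≤ C₂ ∧ ∀ X ∈ M, ∀ Y ∈ M,
        C₁ * dSigma X Y ≤ fnorm (sqrtGram X - sqrtGram Y) ∧
        fnorm (sqrtGram X - sqrtGram Y) ≤ C₂ * dSigma X Y)) ∧
    ((∃ C₁ C₂ : ℝ, 0 < C₁ ∧ C₁ ≤ C₂ ∧ ∀ X ∈ M, ∀ Y ∈ M,
        C₁ * dSigma X Y ≤ fnorm (sqrtGram X - sqrtGram Y) ∧
        fnorm (sqrtGram X - sqrtGram Y) ≤ C₂ * dSigma X Y) ↔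
      (∀ X ∈ M, X ≠ 0 → ∀ Y ∈ M, Y ≠ 0 →
        ¬ (∀ ℓ, (X ℓ)ᵀ * Y ℓ + (Y ℓ)ᵀ * X ℓ = 0))) := by
  have halg := inj_iff_noskew M
  have hii_of_iii :
      (∀ X ∈ M, X ≠ 0 → ∀ Y ∈ M, Y ≠ 0 →
        ¬ (∀ ℓ, (X ℓ)ᵀ * Y ℓ + (Y ℓ)ᵀ * X ℓ = 0)) →
      (∃ C₁ C₂ : ℝ, 0 < C₁ ∧ C₁ ≤ C₂ ∧ ∀ X ∈ M, ∀ Y ∈ M,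
        C₁ * dSigma X Y ≤ fnorm (sqrtGram X - sqrtGram Y) ∧
        fnorm (sqrtGram X - sqrtGram Y) ≤ C₂ * dSigma X Y) := by
    intro hiii
    obtain ⟨c, hc, hlow⟩ := lower_bound M hiii
    refine ⟨min c (Real.sqrt 2), Real.sqrt 2,
      lt_min hc (Real.sqrt_pos.mpr two_pos), min_le_right _ _, fun X hX Y hY => ⟨?_, ?_⟩⟩
    · exact le_trans (mul_le_mul_of_nonneg_right (min_le_left c _) (dSigma_nonneg X Y))
        (hlow X hX Y hY)
    · exact fnorm_sqrtGram_sub_le X Y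
  have hi_of_ii :
      (∃ C₁ C₂ : ℝ, 0 < C₁ ∧ C₁ ≤ C₂ ∧ ∀ X ∈ M, ∀ Y ∈ M,
        C₁ * dSigma X Y ≤ fnorm (sqrtGram X - sqrtGram Y) ∧
        fnorm (sqrtGram X - sqrtGram Y) ≤ C₂ * dSigma X Y) →
      (∀ X ∈ M, ∀ Y ∈ M, (∀ ℓ, (X ℓ)ᵀ * X ℓ = (Y ℓ)ᵀ * Y ℓ) → X = Y ∨ X = -Y) := by
    rintro ⟨C₁, C₂, hC₁, _, hbil⟩ X hX Y hY heq
    have hsg : sqrtGram X = sqrtGram Y := by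
      funext ℓ
      show gramSqrt (X ℓ) = gramSqrt (Y ℓ)
      refine sqrt_congr ?_ (Matrix.posSemidef_conjTranspose_mul_self _)
        (Matrix.posSemidef_conjTranspose_mul_self _)
      rw [Matrix.conjTranspose_eq_transpose_of_trivial,
        Matrix.conjTranspose_eq_transpose_of_trivial, heq ℓ]
    have hzero : fnorm (sqrtGram X - sqrtGram Y) = 0 := by
      rw [hsg, sub_self]
      exact fnorm_eq_zero_iff.mpr rfl
    have h1 := (hbil X hX Y hY).1
    rw [hzero] at h1
    have hds : dSigma X Y ≤ 0 := by
      by_contra hd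
      push_neg at hd
      nlinarith
    have hmin0 : min (fnorm (X - Y)) (fnorm (X + Y)) ≤ 0 := hds
    rcases le_total (fnorm (X - Y)) (fnorm (X + Y)) with h | h
    · left
      have hz : fnorm (X - Y) = 0 :=
        le_antisymm (by rwa [min_eq_left h] at hmin0) (fnorm_nonneg _)
      exact sub_eq_zero.mp (fnorm_eq_zero_iff.mp hz)
    · right
      have hz : fnorm (X + Y) = 0 :=
        le_antisymm (by rwa [min_eq_right h] at hmin0) (fnorm_nonneg _)
      exact eq_neg_of_add_eq_zero_left (fnorm_eq_zero_iff.mp hz)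
  exact ⟨⟨fun hi => hii_of_iii (halg.mp hi), hi_of_ii⟩,
    ⟨fun hii => halg.mp (hi_of_ii hii), hii_of_iii⟩⟩

end GPR
end

section
/- Let M = {(s, t, s+1, t+1) : s, t ∈ ℝ} ⊂ ℝ⁴ and let H = {−1,1}⁴ act on ℝ⁴ by componentwise sign changes. There is no constant C > 0 such that C·min(‖X − Y‖, ‖X + Y‖) ≤ min_{ε∈H} ‖X − ε·Y‖ for all X, Y ∈ M. In particular, for every a > 0, the points X_a = (a, a, a+1, a+1) and Y_a = (a, −a, a+1, −a+1) of M satisfy min(‖X_a − Y_a‖, ‖X_a + Y_a‖) = 2√2·a while min_{ε∈H} ‖X_a − ε·Y_a‖ ≤ 2. -/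
open scoped BigOperators

/-- The Euclidean norm on `ℝ⁴`. -/
noncomputable def nrm4 (x : Fin 4 → ℝ) : ℝ := Real.sqrt (∑ i, (x i) ^ 2)

/-- Componentwise sign-change action of `ε ∈ {−1,1}⁴` on `ℝ⁴`. -/
def signAct (ε x : Fin 4 → ℝ) : Fin 4 → ℝ := fun i => ε i * x i

/-- The affine plane `M = {(s, t, s+1, t+1) : s, t ∈ ℝ} ⊂ ℝ⁴`. -/
def Mplane : Set (Fin 4 → ℝ) := {v | ∃ s t : ℝ, v = ![s, t, s + 1, t + 1]}

/-- `d_H(X,Y) = min_{ε ∈ {−1,1}⁴} ‖X − ε·Y‖`. -/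
noncomputable def dH4 (X Y : Fin 4 → ℝ) : ℝ :=
  ⨅ ε : {ε : Fin 4 → ℝ // ∀ i, ε i = 1 ∨ ε i = -1}, nrm4 (X - signAct ε.1 Y)

lemma nrm4_nonneg (x : Fin 4 → ℝ) : 0 ≤ nrm4 x := Real.sqrt_nonneg _

lemma key (a : ℝ) (ha : 0 < a) :
    ![a, a, a + 1, a + 1] ∈ Mplane ∧ ![a, -a, a + 1, -a + 1] ∈ Mplane ∧
    min (nrm4 (![a, a, a + 1, a + 1] - ![a, -a, a + 1, -a + 1]))
        (nrm4 (![a, a, a + 1, a + 1] + ![a, -a, a + 1, -a + 1]))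
      = 2 * Real.sqrt 2 * a ∧
    dH4 ![a, a, a + 1, a + 1] ![a, -a, a + 1, -a + 1] ≤ 2 := by
  have h2 : Real.sqrt 2 ^ 2 = 2 := Real.sq_sqrt (by norm_num)
  refine ⟨⟨a, a, rfl⟩, ⟨a, -a, by norm_num⟩, ?_, ?_⟩
  · have hd : nrm4 (![a, a, a + 1, a + 1] - ![a, -a, a + 1, -a + 1]) = 2 * Real.sqrt 2 * a := by
      simp only [nrm4, Fin.sum_univ_four, Pi.sub_apply, Matrix.cons_val_zero, Matrix.cons_val_one,
        Matrix.head_cons, Matrix.cons_val_two, Matrix.tail_cons, Matrix.cons_val_three]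
      have : (a - a) ^ 2 + (a - -a) ^ 2 + (a + 1 - (a + 1)) ^ 2 + (a + 1 - (-a + 1)) ^ 2
          = (2 * Real.sqrt 2 * a) ^ 2 := by nlinarith [h2]
      rw [this, Real.sqrt_sq (by positivity)]
    have hs : 2 * Real.sqrt 2 * a ≤ nrm4 (![a, a, a + 1, a + 1] + ![a, -a, a + 1, -a + 1]) := by
      simp only [nrm4, Fin.sum_univ_four, Pi.add_apply, Matrix.cons_val_zero, Matrix.cons_val_one,
        Matrix.head_cons, Matrix.cons_val_two, Matrix.tail_cons, Matrix.cons_val_three]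
      rw [show 2 * Real.sqrt 2 * a = Real.sqrt ((2 * Real.sqrt 2 * a) ^ 2) from
        (Real.sqrt_sq (by positivity)).symm]
      apply Real.sqrt_le_sqrt
      nlinarith [h2]
    rw [min_eq_left (hd ▸ hs), hd]
  · have hbdd : BddBelow (Set.range fun ε : {ε : Fin 4 → ℝ // ∀ i, ε i = 1 ∨ ε i = -1} =>
        nrm4 (![a, a, a + 1, a + 1] - signAct ε.1 ![a, -a, a + 1, -a + 1])) := by
      exact ⟨0, by rintro _ ⟨ε, rfl⟩; exact nrm4_nonneg _⟩
    have hε : (∀ i, (![(1:ℝ), -1, 1, -1]) i = 1 ∨ (![(1:ℝ), -1, 1, -1]) i = -1) := by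
      intro i; fin_cases i <;> simp
    refine le_trans (ciInf_le hbdd ⟨![(1:ℝ), -1, 1, -1], hε⟩) ?_
    have : nrm4 (![a, a, a + 1, a + 1] - signAct ![(1:ℝ), -1, 1, -1] ![a, -a, a + 1, -a + 1])
        = 2 := by
      simp only [nrm4, signAct, Fin.sum_univ_four, Pi.sub_apply, Matrix.cons_val_zero,
        Matrix.cons_val_one, Matrix.head_cons, Matrix.cons_val_two, Matrix.tail_cons,
        Matrix.cons_val_three]
      have : (a - 1 * a) ^ 2 + (a - -1 * -a) ^ 2 + (a + 1 - 1 * (a + 1)) ^ 2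
          + (a + 1 - -1 * (-a + 1)) ^ 2 = 4 := by ring
      rw [this]
      rw [show (4:ℝ) = 2 ^ 2 by norm_num, Real.sqrt_sq (by norm_num)]
    linarith [this.le]

/-- There is no `C > 0` with `C·d_σ(X,Y) ≤ d_H(X,Y)` on the plane
`M = {(s,t,s+1,t+1)}`; in particular, for every `a > 0` the points
`X_a = (a,a,a+1,a+1)` and `Y_a = (a,−a,a+1,−a+1)` of `M` satisfy
`min(‖X_a−Y_a‖, ‖X_a+Y_a‖) = 2√2·a` while `min_{ε} ‖X_a − ε·Y_a‖ ≤ 2`. -/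
theorem plane_not_lower_lipschitz :
    (¬ ∃ C : ℝ, 0 < C ∧ ∀ X ∈ Mplane, ∀ Y ∈ Mplane,
        C * min (nrm4 (X - Y)) (nrm4 (X + Y)) ≤ dH4 X Y) ∧
    ∀ a : ℝ, 0 < a →
      ![a, a, a + 1, a + 1] ∈ Mplane ∧ ![a, -a, a + 1, -a + 1] ∈ Mplane ∧
      min (nrm4 (![a, a, a + 1, a + 1] - ![a, -a, a + 1, -a + 1]))
          (nrm4 (![a, a, a + 1, a + 1] + ![a, -a, a + 1, -a + 1]))
        = 2 * Real.sqrt 2 * a ∧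
      dH4 ![a, a, a + 1, a + 1] ![a, -a, a + 1, -a + 1] ≤ 2 := by
  refine ⟨?_, fun a ha => key a ha⟩
  rintro ⟨C, hC, hforall⟩
  set a := 2 / C with hadef
  have ha : 0 < a := by positivity
  obtain ⟨hX, hY, hmin, hdH⟩ := key a ha
  have h := hforall _ hX _ hY
  rw [hmin] at h
  have hsqrt2 : 1 ≤ Real.sqrt 2 := by
    rw [show (1:ℝ) = Real.sqrt 1 from (Real.sqrt_one).symm]
    exact Real.sqrt_le_sqrt (by norm_num)
  have hCa : C * a = 2 := by rw [hadef]; field_simp [hC.ne']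
  have : C * (2 * Real.sqrt 2 * a) = 2 * Real.sqrt 2 * 2 := by
    rw [show C * (2 * Real.sqrt 2 * a) = 2 * Real.sqrt 2 * (C * a) by ring, hCa]
  nlinarith [h, hdH, this, hsqrt2]
end

section
/- Let M be a positive integer, let d_0 = M and d_1,…,d_k be positive integers, let A_i : ℝ^{d_{i-1}} → ℝ^{d_i} (i = 1,…,k) be affine maps, and let η : ℝ^d → ℝ^d denote the componentwise ReLU map η(u)_j = max(u_j, 0). Then the image f([0,1]^M) of the unit cube under f = η ∘ A_k ∘ η ∘ A_{k-1} ∘ ⋯ ∘ η ∘ A_1 is compact and is contained in a finite union of affine subspaces of ℝ^{d_k}, each of dimension at most M. -/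
open scoped BigOperators

/-- Componentwise ReLU: `η(u)_j = max(u_j, 0)`. -/
def relu {p : ℕ} (u : Fin p → ℝ) : Fin p → ℝ := fun j => max (u j) 0

/-- The ReLU network `net d W b j = η ∘ A_j ∘ η ∘ A_{j-1} ∘ ⋯ ∘ η ∘ A_1`, where the affine
map `A_{i+1} : ℝ^{d i} → ℝ^{d (i+1)}` is `x ↦ W i · x + b i`. -/
def net (d : ℕ → ℕ) (W : ∀ i : ℕ, Matrix (Fin (d (i + 1))) (Fin (d i)) ℝ)
    (b : ∀ i : ℕ, Fin (d (i + 1)) → ℝ) : (j : ℕ) → (Fin (d 0) → ℝ) → Fin (d j) → ℝ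
  | 0 => fun x => x
  | j + 1 => fun x => relu ((W j).mulVec (net d W b j x) + b j)

/-- Coordinatewise mask: keep coordinate `j` if `ε j`, else zero. -/
def maskMap {p : ℕ} (ε : Fin p → Bool) : (Fin p → ℝ) →ₗ[ℝ] (Fin p → ℝ) where
  toFun v := fun j => if ε j then v j else 0
  map_add' u v := by funext j; by_cases h : ε j <;> simp [h]
  map_smul' c v := by funext j; by_cases h : ε j <;> simp [h]

/-- The affine layer `x ↦ W i x + b i`. -/
noncomputable def layer (d : ℕ → ℕ) (W : ∀ i : ℕ, Matrix (Fin (d (i + 1))) (Fin (d i)) ℝ)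
    (b : ∀ i : ℕ, Fin (d (i + 1)) → ℝ) (i : ℕ) :
    (Fin (d i) → ℝ) →ᵃ[ℝ] (Fin (d (i + 1)) → ℝ) where
  toFun x := (W i).mulVec x + b i
  linear := (W i).mulVecLin
  map_vadd' p v := by
    simp [Matrix.mulVec_add]
    abel

/-- The masked (affine) network with activation pattern `ε`. -/
noncomputable def gnet (d : ℕ → ℕ) (W : ∀ i : ℕ, Matrix (Fin (d (i + 1))) (Fin (d i)) ℝ)
    (b : ∀ i : ℕ, Fin (d (i + 1)) → ℝ) (ε : ∀ i : ℕ, Fin (d (i + 1)) → Bool) :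
    (j : ℕ) → (Fin (d 0) → ℝ) →ᵃ[ℝ] (Fin (d j) → ℝ)
  | 0 => AffineMap.id ℝ _
  | j + 1 => ((maskMap (ε j)).toAffineMap.comp (layer d W b j)).comp (gnet d W b ε j)

lemma gnet_eq_net (d : ℕ → ℕ) (W : ∀ i : ℕ, Matrix (Fin (d (i + 1))) (Fin (d i)) ℝ)
    (b : ∀ i : ℕ, Fin (d (i + 1)) → ℝ) (ε : ∀ i : ℕ, Fin (d (i + 1)) → Bool)
    (x : Fin (d 0) → ℝ) (j : ℕ)
    (hε : ∀ i < j, ∀ j', ε i j' = decide (0 ≤ ((W i).mulVec (net d W b i x) + b i) j')) :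
    gnet d W b ε j x = net d W b j x := by
  induction j with
  | zero => rfl
  | succ j ih =>
    have h1 : gnet d W b ε j x = net d W b j x :=
      ih fun i hi => hε i (hi.trans (Nat.lt_succ_self j))
    show maskMap (ε j) ((layer d W b j) (gnet d W b ε j x)) = _
    rw [h1]
    funext j'
    have h2 := hε j (Nat.lt_succ_self j) j'
    show (if ε j j' then _ else 0) = relu ((W j).mulVec (net d W b j x) + b j) j'
    rw [h2]
    simp only [relu, layer, AffineMap.coe_mk]
    rcases le_or_gt 0 (((W j).mulVec (net d W b j x) + b j) j') with h | h
    · simp only [Pi.add_apply] at h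
      simp [h, max_eq_left h]
    · simp only [Pi.add_apply] at h
      simp [not_le.mpr h, max_eq_right h.le]

lemma net_continuous (d : ℕ → ℕ) (W : ∀ i : ℕ, Matrix (Fin (d (i + 1))) (Fin (d i)) ℝ)
    (b : ∀ i : ℕ, Fin (d (i + 1)) → ℝ) (j : ℕ) : Continuous (net d W b j) := by
  induction j with
  | zero => exact continuous_id
  | succ j ih =>
    have h1 : Continuous (fun x => (W j).mulVec (net d W b j x) + b j) :=
      (((W j).mulVecLin.continuous_of_finiteDimensional).comp ih).add continuous_const
    exact (continuous_pi fun j' => (continuous_apply j').max continuous_const).comp h1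

/-- The image of the unit cube `[0,1]^M` under a ReLU network
`f = η ∘ A_k ∘ η ∘ A_{k-1} ∘ ⋯ ∘ η ∘ A_1` (with `d 0 = M`) is compact and contained in a
finite union of affine subspaces of `ℝ^{d k}`, each of dimension at most `M`. -/
theorem relu_image_compact_subset_affine_union
    (M k : ℕ) (hM : 0 < M)
    (d : ℕ → ℕ) (hd0 : d 0 = M) (hdpos : ∀ i ≤ k, 0 < d i)
    (W : ∀ i : ℕ, Matrix (Fin (d (i + 1))) (Fin (d i)) ℝ)
    (b : ∀ i : ℕ, Fin (d (i + 1)) → ℝ) :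
    IsCompact (net d W b k '' Set.Icc (0 : Fin (d 0) → ℝ) 1) ∧
    ∃ (m : ℕ) (A : Fin m → AffineSubspace ℝ (Fin (d k) → ℝ)),
      (∀ i, Module.finrank ℝ (A i).direction ≤ M) ∧
      net d W b k '' Set.Icc (0 : Fin (d 0) → ℝ) 1 ⊆ ⋃ i, (A i : Set (Fin (d k) → ℝ)) := by
  constructor
  · exact isCompact_Icc.image (net_continuous d W b k)
  · -- index type: activation patterns
    set P := ∀ i : Fin k, Fin (d (i + 1)) → Bool with hP
    have : Fintype P := by infer_instance
    set e : Fin (Fintype.card P) ≃ P := (Fintype.equivFin P).symm with he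
    -- extend a pattern to all of ℕ
    let ext : P → ∀ i : ℕ, Fin (d (i + 1)) → Bool := fun p i =>
      if h : i < k then p ⟨i, h⟩ else fun _ => true
    refine ⟨Fintype.card P, fun i => AffineSubspace.map (gnet d W b (ext (e i)) k) ⊤, ?_, ?_⟩
    · intro i
      rw [AffineSubspace.map_direction, AffineSubspace.direction_top, Submodule.map_top]
      calc Module.finrank ℝ (LinearMap.range (gnet d W b (ext (e i)) k).linear)
          ≤ Module.finrank ℝ (Fin (d 0) → ℝ) := LinearMap.finrank_range_le _
        _ = M := by rw [Module.finrank_pi, Fintype.card_fin, hd0]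
    · rintro y ⟨x, hx, rfl⟩
      let p : P := fun i j' => decide (0 ≤ ((W i).mulVec (net d W b i x) + b i) j')
      refine Set.mem_iUnion.mpr ⟨e.symm p, ?_⟩
      have hg : gnet d W b (ext (e (e.symm p))) k x = net d W b k x := by
        apply gnet_eq_net
        intro i hi j'
        simp only [ext, Equiv.apply_symm_apply, dif_pos hi]
        rfl
      rw [← hg]
      exact AffineSubspace.mem_map.mpr ⟨x, trivial, rfl⟩
end

section
/- Let m, n be positive integers, let U be an open neighborhood of 0 in ℝ^m, and let φ : ℝ^m → ℝ^n be continuously differentiable on U with injective derivative Dφ(0) at 0. Let T : ℝ^n → ℝ^n be the orthogonal projection onto the range of Dφ(0). Let (t_k) and (s_k) be sequences in U with t_k → 0, s_k → 0, and t_k ≠ s_k for all k, and set X_k = φ(t_k), Y_k = φ(s_k). Then for all sufficiently large k one has X_k ≠ Y_k, and ‖T(X_k − Y_k)‖ / ‖X_k − Y_k‖ → 1 and ‖(I − T)(X_k − Y_k)‖ / ‖X_k − Y_k‖ → 0 as k → ∞, where ‖·‖ is the Euclidean norm on ℝ^n. -/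
open scoped BigOperators

set_option maxHeartbeats 1000000

/-- Let `φ : ℝ^m → ℝ^n` be C¹ near `0` with injective derivative at `0`, and let
`T` be the orthogonal projection onto the range of `Dφ(0)`. For sequences `t_k → 0`, `s_k → 0`
in `U` with `t_k ≠ s_k`, setting `X_k = φ(t_k)`, `Y_k = φ(s_k)`, eventually `X_k ≠ Y_k`, and
`‖T(X_k − Y_k)‖/‖X_k − Y_k‖ → 1` while `‖(I − T)(X_k − Y_k)‖/‖X_k − Y_k‖ → 0`. -/
theorem tangent_projection_ratio
    (m n : ℕ) (hm : 0 < m) (hn : 0 < n)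
    (U : Set (EuclideanSpace ℝ (Fin m))) (hU : IsOpen U)
    (h0U : (0 : EuclideanSpace ℝ (Fin m)) ∈ U)
    (φ : EuclideanSpace ℝ (Fin m) → EuclideanSpace ℝ (Fin n))
    (hφ : ContDiffOn ℝ 1 φ U)
    (hinj : Function.Injective ⇑(fderiv ℝ φ 0))
    (t s : ℕ → EuclideanSpace ℝ (Fin m))
    (ht : ∀ k, t k ∈ U) (hs : ∀ k, s k ∈ U)
    (htlim : Filter.Tendsto t Filter.atTop (nhds 0))
    (hslim : Filter.Tendsto s Filter.atTop (nhds 0))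
    (hne : ∀ k, t k ≠ s k) :
    (∃ k₀ : ℕ, ∀ k ≥ k₀, φ (t k) ≠ φ (s k)) ∧
    Filter.Tendsto
      (fun k => ‖(Submodule.orthogonalProjectionOnto (LinearMap.range
          (fderiv ℝ φ 0 : EuclideanSpace ℝ (Fin m) →ₗ[ℝ] EuclideanSpace ℝ (Fin n)))
          (φ (t k) - φ (s k)) : EuclideanSpace ℝ (Fin n))‖ / ‖φ (t k) - φ (s k)‖)
      Filter.atTop (nhds 1) ∧
    Filter.Tendsto
      (fun k => ‖(φ (t k) - φ (s k)) - (Submodule.orthogonalProjectionOnto (LinearMap.range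
          (fderiv ℝ φ 0 : EuclideanSpace ℝ (Fin m) →ₗ[ℝ] EuclideanSpace ℝ (Fin n)))
          (φ (t k) - φ (s k)) : EuclideanSpace ℝ (Fin n))‖ / ‖φ (t k) - φ (s k)‖)
      Filter.atTop (nhds 0) := by
  classical
  set A := fderiv ℝ φ 0 with hAdef
  set W := LinearMap.range (A : EuclideanSpace ℝ (Fin m) →ₗ[ℝ] EuclideanSpace ℝ (Fin n)) with hWdef
  set P := Submodule.orthogonalProjectionOnto W with hPdef
  -- strict differentiability
  have hφat : ContDiffAt ℝ 1 φ 0 := hφ.contDiffAt (hU.mem_nhds h0U)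
  have hstrict : HasStrictFDerivAt φ A 0 := hφat.hasStrictFDerivAt one_ne_zero
  -- antilipschitz constant
  obtain ⟨K, hK0, hK⟩ := (A : EuclideanSpace ℝ (Fin m) →ₗ[ℝ]
      EuclideanSpace ℝ (Fin n)).exists_antilipschitzWith (LinearMap.ker_eq_bot.mpr hinj)
  set C : ℝ := (K : ℝ) with hCdef
  have hC : 0 < C := hK0
  have hAv : ∀ v : EuclideanSpace ℝ (Fin m), ‖v‖ ≤ C * ‖A v‖ := by
    intro v
    have := hK.le_mul_dist v 0
    simpa [dist_eq_norm] using this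
  -- notation
  set v : ℕ → EuclideanSpace ℝ (Fin m) := fun k => t k - s k with hvdef
  set D : ℕ → EuclideanSpace ℝ (Fin n) := fun k => φ (t k) - φ (s k) with hDdef
  set E : ℕ → EuclideanSpace ℝ (Fin n) := fun k => φ (t k) - φ (s k) - A (t k - s k) with hEdef
  have hvne : ∀ k, v k ≠ 0 := fun k => sub_ne_zero.mpr (hne k)
  have hvpos : ∀ k, 0 < ‖v k‖ := fun k => norm_pos_iff.mpr (hvne k)
  -- little o
  have hprod : Filter.Tendsto (fun k => (t k, s k)) Filter.atTop
      (nhds ((0 : EuclideanSpace ℝ (Fin m)), (0 : EuclideanSpace ℝ (Fin m)))) :=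
    htlim.prodMk_nhds hslim
  have ho : E =o[Filter.atTop] v := hstrict.isLittleO.comp_tendsto hprod
  -- lower bound on ‖D k‖
  have hDlow : ∀ᶠ k in Filter.atTop, (1 / (2 * C)) * ‖v k‖ ≤ ‖D k‖ := by
    filter_upwards [ho.def (by positivity : (0:ℝ) < 1 / (2 * C))] with k hk
    have h1 : ‖v k‖ / C ≤ ‖A (v k)‖ := by
      rw [div_le_iff₀ hC]
      calc ‖v k‖ ≤ C * ‖A (v k)‖ := hAv _
        _ = ‖A (v k)‖ * C := mul_comm _ _
    have h2 : ‖A (v k)‖ ≤ ‖D k‖ + ‖E k‖ := by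
      have hAvk : A (v k) = D k - E k := by simp [hDdef, hEdef, hvdef]
      rw [hAvk]
      exact norm_sub_le _ _
    have h3 : ‖E k‖ ≤ (1 / (2 * C)) * ‖v k‖ := hk
    have : ‖v k‖ / C - (1 / (2 * C)) * ‖v k‖ = (1 / (2 * C)) * ‖v k‖ := by
      field_simp; ring
    nlinarith [h1, h2, h3]
  have hDpos : ∀ᶠ k in Filter.atTop, 0 < ‖D k‖ := by
    filter_upwards [hDlow] with k hk
    have : 0 < (1 / (2 * C)) * ‖v k‖ :=
      mul_pos (div_pos one_pos (by linarith)) (hvpos k)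
    linarith
  -- first conjunct
  have hDne : ∃ k₀ : ℕ, ∀ k ≥ k₀, φ (t k) ≠ φ (s k) := by
    obtain ⟨k₀, h⟩ := Filter.eventually_atTop.mp hDpos
    exact ⟨k₀, fun k hk => sub_ne_zero.mp (norm_pos_iff.mp (h k hk))⟩
  -- key: D - P D = E - P E
  have hkey : ∀ k, D k - (P (D k) : EuclideanSpace ℝ (Fin n))
      = E k - (P (E k) : EuclideanSpace ℝ (Fin n)) := by
    intro k
    have hmem : A (v k) ∈ W := LinearMap.mem_range_self _ _
    have hDE : D k = E k + A (v k) := by simp [hDdef, hEdef, hvdef]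
    have hP : (P (D k) : EuclideanSpace ℝ (Fin n))
        = (P (E k) : EuclideanSpace ℝ (Fin n)) + A (v k) := by
      rw [hDE, map_add]
      push_cast
      rw [show (P (A (v k)) : EuclideanSpace ℝ (Fin n)) = A (v k) from
        Submodule.starProjection_eq_self_iff.mpr hmem]
    rw [hP, hDE]; abel
  -- bound: ‖D - P D‖ ≤ ‖E‖
  have hsub_le : ∀ k, ‖D k - (P (D k) : EuclideanSpace ℝ (Fin n))‖ ≤ ‖E k‖ := by
    intro k
    rw [hkey k, show E k - (P (E k) : EuclideanSpace ℝ (Fin n))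
        = (Wᗮ.orthogonalProjectionOnto (E k) : EuclideanSpace ℝ (Fin n)) from
        (Submodule.starProjection_orthogonal_val (E k)).symm]
    calc ‖(Wᗮ.orthogonalProjectionOnto (E k) : EuclideanSpace ℝ (Fin n))‖
        ≤ ‖Wᗮ.orthogonalProjectionOnto‖ * ‖E k‖ := (Wᗮ.orthogonalProjectionOnto).le_opNorm _
      _ ≤ 1 * ‖E k‖ := by
          exact mul_le_mul_of_nonneg_right (Submodule.orthogonalProjectionOnto_norm_le _) (norm_nonneg _)
      _ = ‖E k‖ := one_mul _
  -- Tendsto ‖E‖/‖v‖ → 0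
  have hEv : Filter.Tendsto (fun k => ‖E k‖ / ‖v k‖) Filter.atTop (nhds 0) := by
    have := ho.norm_norm
    rw [Asymptotics.isLittleO_iff_tendsto (fun k h => absurd h (ne_of_gt (hvpos k)))] at this
    exact this
  -- Tendsto ‖E‖/‖D‖ → 0
  have hED : Filter.Tendsto (fun k => ‖E k‖ / ‖D k‖) Filter.atTop (nhds 0) := by
    have hbd : ∀ᶠ k in Filter.atTop, ‖E k‖ / ‖D k‖ ≤ (2 * C) * (‖E k‖ / ‖v k‖) := by
      filter_upwards [hDlow] with k hk
      have hpos : 0 < (1 / (2 * C)) * ‖v k‖ :=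
        mul_pos (div_pos one_pos (by linarith)) (hvpos k)
      have h1 : ‖E k‖ / ‖D k‖ ≤ ‖E k‖ / ((1 / (2 * C)) * ‖v k‖) :=
        div_le_div_of_nonneg_left (norm_nonneg _) hpos hk
      have h2 : ‖E k‖ / ((1 / (2 * C)) * ‖v k‖) = (2 * C) * (‖E k‖ / ‖v k‖) := by
        field_simp
      linarith [h1, h2.le, h2.ge]
    have hlim : Filter.Tendsto (fun k => (2 * C) * (‖E k‖ / ‖v k‖)) Filter.atTop (nhds 0) := by
      have := hEv.const_mul (2 * C)
      simpa using this
    refine squeeze_zero' ?_ hbd hlim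
    filter_upwards with k; positivity
  -- third conjunct
  have h3 : Filter.Tendsto
      (fun k => ‖D k - (P (D k) : EuclideanSpace ℝ (Fin n))‖ / ‖D k‖)
      Filter.atTop (nhds 0) := by
    refine squeeze_zero' ?_ ?_ hED
    · filter_upwards with k; positivity
    · filter_upwards [hDpos] with k hk
      exact div_le_div_of_nonneg_right (hsub_le k) hk.le |>.trans_eq rfl
  -- second conjunct
  have h2 : Filter.Tendsto
      (fun k => ‖(P (D k) : EuclideanSpace ℝ (Fin n))‖ / ‖D k‖)
      Filter.atTop (nhds 1) := by
    have : Filter.Tendsto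
        (fun k => ‖(P (D k) : EuclideanSpace ℝ (Fin n))‖ / ‖D k‖ - 1)
        Filter.atTop (nhds 0) := by
      refine squeeze_zero_norm' ?_ h3
      filter_upwards [hDpos] with k hk
      have habs : |‖(P (D k) : EuclideanSpace ℝ (Fin n))‖ - ‖D k‖|
          ≤ ‖D k - (P (D k) : EuclideanSpace ℝ (Fin n))‖ := by
        rw [abs_sub_comm]
        exact abs_norm_sub_norm_le _ _ |>.trans_eq rfl
      have : ‖(P (D k) : EuclideanSpace ℝ (Fin n))‖ / ‖D k‖ - 1
          = (‖(P (D k) : EuclideanSpace ℝ (Fin n))‖ - ‖D k‖) / ‖D k‖ := by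
        field_simp
      rw [Real.norm_eq_abs, this, abs_div, abs_of_pos hk]
      exact div_le_div_of_nonneg_right habs hk.le
    have := this.add_const 1
    simpa using this
  exact ⟨hDne, h2, h3⟩
end
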